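/- The Möbius ladder ML_8 (the 8-cycle v1...v8 together with the four diagonals v_i v_{i+4}) is triangle-free and contains exactly 8 copies of the 5-cycle, which equals the number of 5-cycles in the balanced blow-up of C5 on 8 vertices (with part sizes 2,2,2,1,1). -/

import Mathlib

set_option maxRecDepth 100000


/-- The number of (unlabeled) copies of `C₅` in a graph. -/
noncomputable def c5Count {V : Type*} [Fintype V] (G : SimpleGraph V) : ℕ :=
  Set.ncard {s : Finset V | s.card = 5 ∧
    Nonempty (G.induce (s : Set V) ≃g SimpleGraph.cycleGraph 5)}

/-- The Möbius ladder `ML₈`: the 8-cycle together with the four main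
diagonals. -/
def mobiusLadder8 : SimpleGraph (Fin 8) where
  Adj i j := j = i + 1 ∨ i = j + 1 ∨ j = i + 4
  symm := ⟨fun i j => by fin_cases i <;> fin_cases j <;> decide⟩
  loopless := ⟨fun i => by fin_cases i <;> decide⟩

/-- The blow-up of `C₅` along a part-assignment `f : V → Fin 5`. -/
def blowupC5 {V : Type*} (f : V → Fin 5) : SimpleGraph V where
  Adj u w := f w = f u + 1 ∨ f u = f w + 1
  symm := ⟨fun _ _ h => h.symm⟩
  loopless := ⟨fun u h => by
    rcases h with h | h <;> · rw [left_eq_add] at h; exact one_ne_zero h⟩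

instance : DecidableRel mobiusLadder8.Adj := fun i j =>
  inferInstanceAs (Decidable (j = i + 1 ∨ i = j + 1 ∨ j = i + 4))

instance {V : Type*} (f : V → Fin 5) : DecidableRel (blowupC5 f).Adj := fun u w =>
  inferInstanceAs (Decidable (f w = f u + 1 ∨ f u = f w + 1))

instance instDecInduce {V : Type*} (G : SimpleGraph V) [DecidableRel G.Adj] (s : Set V) :
    DecidableRel (G.induce s).Adj := fun a b =>
  inferInstanceAs (Decidable (G.Adj ↑a ↑b))

/-- Neighbors in an induced subgraph correspond to the filter of neighbors. -/
def neighborEquivAux {V : Type*} [DecidableEq V] (G : SimpleGraph V) [DecidableRel G.Adj]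
    (s : Finset V) (v : (s : Set V)) :
    (G.induce (s : Set V)).neighborSet v ≃ (s.filter (G.Adj ↑v) : Finset V) where
  toFun u := ⟨(↑u : (s : Set V)), by
    simp only [Finset.mem_coe, Finset.mem_filter]
    exact ⟨(↑u : (s : Set V)).2, u.2⟩⟩
  invFun x := ⟨⟨(↑x : V), by
      have := x.2; simp only [Finset.mem_coe, Finset.mem_filter] at this
      exact this.1⟩, by
      have := x.2; simp only [Finset.mem_coe, Finset.mem_filter] at this
      exact this.2⟩
  left_inv u := by ext; rfl
  right_inv x := by ext; rfl

theorem degree_two_of_iso {V : Type*} [DecidableEq V] (G : SimpleGraph V) [DecidableRel G.Adj]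
    (s : Finset V) (h : Nonempty (G.induce (s : Set V) ≃g SimpleGraph.cycleGraph 5)) :
    ∀ v ∈ s, (s.filter (G.Adj v)).card = 2 := by
  obtain ⟨φ⟩ := h
  intro v hv
  have e := (neighborEquivAux G s ⟨v, hv⟩).symm.trans (φ.mapNeighborSet ⟨v, hv⟩)
  have hc := Fintype.card_congr e
  rw [Fintype.card_coe] at hc
  rw [hc, SimpleGraph.card_neighborSet_eq_degree]
  exact SimpleGraph.cycleGraph_degree_three_le (n := 2)

theorem mem_c5_set {V : Type*} [DecidableEq V] (G : SimpleGraph V)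
    (s : Finset V) (v : Fin 5 → V) (hs : s = Finset.univ.image v)
    (hinj : Function.Injective v)
    (hadj : ∀ i j, G.Adj (v i) (v j) ↔ (SimpleGraph.cycleGraph 5).Adj i j) :
    s.card = 5 ∧ Nonempty (G.induce (s : Set V) ≃g SimpleGraph.cycleGraph 5) := by
  subst hs
  refine ⟨by rw [Finset.card_image_of_injective _ hinj, Finset.card_univ, Fintype.card_fin], ?_⟩
  set s : Finset V := Finset.univ.image v with hsdef
  let f : Fin 5 → (s : Set V) := fun i => ⟨v i, by simp [hsdef]⟩
  have hbij : Function.Bijective f := by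
    constructor
    · intro a b hab
      exact hinj (congrArg Subtype.val hab)
    · rintro ⟨x, hx⟩
      simp only [hsdef, Finset.coe_image, Finset.coe_univ, Set.image_univ,
        Set.mem_range] at hx
      obtain ⟨i, hi⟩ := hx
      exact ⟨i, Subtype.ext hi⟩
  refine ⟨⟨(Equiv.ofBijective f hbij).symm, ?_⟩⟩
  intro a b
  obtain ⟨i, rfl⟩ := hbij.surjective a
  obtain ⟨j, rfl⟩ := hbij.surjective b
  have hi : (Equiv.ofBijective f hbij).symm (f i) = i := (Equiv.ofBijective f hbij).symm_apply_apply i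
  have hj : (Equiv.ofBijective f hbij).symm (f j) = j := (Equiv.ofBijective f hbij).symm_apply_apply j
  rw [hi, hj]
  exact (hadj i j).symm

theorem c5Count_eq {V : Type*} [Fintype V] [DecidableEq V] (G : SimpleGraph V)
    [DecidableRel G.Adj] (L : Finset (Finset V))
    (h1 : ∀ s : Finset V, s.card = 5 → (∀ v ∈ s, (s.filter (G.Adj v)).card = 2) → s ∈ L)
    (h2 : ∀ s ∈ L, s.card = 5 ∧ Nonempty (G.induce (s : Set V) ≃g SimpleGraph.cycleGraph 5)) :
    c5Count G = L.card := by
  unfold c5Count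
  have hset : {s : Finset V | s.card = 5 ∧
      Nonempty (G.induce (s : Set V) ≃g SimpleGraph.cycleGraph 5)} = ↑L := by
    ext s
    simp only [Set.mem_setOf_eq, Finset.mem_coe]
    constructor
    · rintro ⟨hc, hiso⟩
      exact h1 s hc (degree_two_of_iso G s hiso)
    · exact h2 s
  rw [hset, Set.ncard_coe_finset]

/-- `ML₈` is triangle-free and has exactly `8` copies of `C₅`, the same number
as the balanced blow-up of `C₅` on 8 vertices (part sizes 2,2,2,1,1). -/
theorem mobiusLadder8_triangle_free_and_c5 :
    mobiusLadder8.CliqueFree 3 ∧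
    c5Count mobiusLadder8 = 8 ∧
    c5Count (blowupC5 (![0, 0, 1, 1, 2, 2, 3, 4] : Fin 8 → Fin 5)) = 8 := by
  refine ⟨?_, ?_, ?_⟩
  · intro t ht
    revert ht
    revert t
    decide
  · have := c5Count_eq mobiusLadder8
      ({{0,1,2,3,4}, {0,1,2,3,7}, {0,1,2,6,7}, {0,1,5,6,7}, {0,4,5,6,7},
        {1,2,3,4,5}, {2,3,4,5,6}, {3,4,5,6,7}} : Finset (Finset (Fin 8)))
      (by decide) ?_
    · rw [this]; decide
    · intro s hs
      fin_cases hs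
      · exact mem_c5_set _ _ ![0,1,2,3,4] (by decide) (by decide) (by decide)
      · exact mem_c5_set _ _ ![0,1,2,3,7] (by decide) (by decide) (by decide)
      · exact mem_c5_set _ _ ![0,1,2,6,7] (by decide) (by decide) (by decide)
      · exact mem_c5_set _ _ ![0,1,5,6,7] (by decide) (by decide) (by decide)
      · exact mem_c5_set _ _ ![0,4,5,6,7] (by decide) (by decide) (by decide)
      · exact mem_c5_set _ _ ![1,2,3,4,5] (by decide) (by decide) (by decide)
      · exact mem_c5_set _ _ ![2,3,4,5,6] (by decide) (by decide) (by decide)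
      · exact mem_c5_set _ _ ![3,4,5,6,7] (by decide) (by decide) (by decide)
  · have := c5Count_eq (blowupC5 (![0, 0, 1, 1, 2, 2, 3, 4] : Fin 8 → Fin 5))
      ({{0,2,4,6,7}, {0,2,5,6,7}, {0,3,4,6,7}, {0,3,5,6,7},
        {1,2,4,6,7}, {1,2,5,6,7}, {1,3,4,6,7}, {1,3,5,6,7}} : Finset (Finset (Fin 8)))
      (by decide) ?_
    · rw [this]; decide
    · intro s hs
      fin_cases hs
      · exact mem_c5_set _ _ ![0,2,4,6,7] (by decide) (by decide) (by decide)
      · exact mem_c5_set _ _ ![0,2,5,6,7] (by decide) (by decide) (by decide)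
      · exact mem_c5_set _ _ ![0,3,4,6,7] (by decide) (by decide) (by decide)
      · exact mem_c5_set _ _ ![0,3,5,6,7] (by decide) (by decide) (by decide)
      · exact mem_c5_set _ _ ![1,2,4,6,7] (by decide) (by decide) (by decide)
      · exact mem_c5_set _ _ ![1,2,5,6,7] (by decide) (by decide) (by decide)
      · exact mem_c5_set _ _ ![1,3,4,6,7] (by decide) (by decide) (by decide)
      · exact mem_c5_set _ _ ![1,3,5,6,7] (by decide) (by decide) (by decide)
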